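/- Let k ≥ 1 and x : Fin k → ℕ with max_i x i ≥ 1. Let M = {μ_0 < μ_1 < ⋯ < μ_{r−1}} be the set of colors attaining the maximum of x, and assume r ≥ 2. Then every braket (i,j) occurring in U(x) = Σ_{p=1}^{q} f(G_p) lies within one of the circular arcs between consecutive majority colors: there exists s < r such that [(i − μ_s) mod k] + [(j − i) mod k] ≤ [(μ_{(s+1) mod r} − μ_s) mod k], where each bracket denotes the representative in {0,…,k−1} of the given integer modulo k (equivalently, the modulo range [i,j]_k is contained in [μ_s, μ_{(s+1) mod r}]_k). -/

import Mathlib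

/-- The greedy independent set `G_p = {i : x i ≥ p}`. -/
def greedySet (k : ℕ) (x : Fin k → ℕ) (p : ℕ) : Finset (Fin k) :=
  Finset.univ.filter (fun i => p ≤ x i)

/-- The circle braket multiset of a finite set of colors `g_0 < g_1 < … < g_m`:
`{(g_0,g_1), (g_1,g_2), …, (g_{m−1},g_m), (g_m,g_0)}`. -/
def circleBrakets (k : ℕ) (S : Finset (Fin k)) : Multiset (Fin k × Fin k) :=
  ↑((S.sort (· ≤ ·)).zip ((S.sort (· ≤ ·)).rotate 1))

/-- `U(x) = Σ_{p=1}^{q} f(G_p)`, with `q = max_i x i`. -/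
def U (k : ℕ) (x : Fin k → ℕ) : Multiset (Fin k × Fin k) :=
  ∑ p ∈ Finset.Icc 1 (Finset.univ.sup x), circleBrakets k (greedySet k x p)

/-- The `s`-th element (in increasing order) of a finite set `M ⊆ Fin k`. -/
def nth (k : ℕ) (M : Finset (Fin k)) (s : Fin M.card) : Fin k :=
  (M.orderIsoOfFin rfl s).val

/-- Circular distance from `a` to `b` on `Fin k`. -/
def cd (k : ℕ) (a b : Fin k) : ℕ := (b.val + k - a.val) % k

lemma cd_eq {k : ℕ} (a b : Fin k) :
    cd k a b = if a.val ≤ b.val then b.val - a.val else b.val + k - a.val := by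
  have ha := a.isLt; have hb := b.isLt
  unfold cd
  split_ifs with h
  · have : b.val + k - a.val = (b.val - a.val) + k := by omega
    rw [this, Nat.add_mod_right, Nat.mod_eq_of_lt (by omega)]
  · rw [Nat.mod_eq_of_lt (by omega)]

lemma cd_lt {k : ℕ} (a b : Fin k) : cd k a b < k := by
  have := a.isLt; have := b.isLt; rw [cd_eq]; split_ifs <;> omega

lemma cd_zero_iff {k : ℕ} (a b : Fin k) : cd k a b = 0 ↔ a = b := by
  have := a.isLt; have := b.isLt
  rw [cd_eq]; constructor
  · intro h; apply Fin.ext; split_ifs at h <;> omega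
  · rintro rfl; simp

lemma cd_right_cancel {k : ℕ} {a b c : Fin k} (h : cd k a b = cd k a c) : b = c := by
  have := a.isLt; have := b.isLt; have := c.isLt
  rw [cd_eq, cd_eq] at h
  apply Fin.ext
  split_ifs at h <;> omega

lemma cd_cycle {k : ℕ} (a b c : Fin k) :
    cd k a b + cd k b c = cd k a c ∨ cd k a b + cd k b c = cd k a c + k := by
  have := a.isLt; have := b.isLt; have := c.isLt
  simp only [cd_eq]; split_ifs <;> omega

/-- In a strictly sorted list read circularly, the element at `(t+1) % len`
minimizes the circular distance from the element at `t` among other elements. -/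
lemma cd_succ_min {k : ℕ} (L : List (Fin k)) (hL : L.Pairwise (· < ·))
    (t u : ℕ) (ht : t < L.length) (hu : u < L.length) (hut : u ≠ t) :
    cd k (L.get ⟨t, ht⟩) (L.get ⟨(t+1) % L.length, Nat.mod_lt _ (by omega)⟩)
      ≤ cd k (L.get ⟨t, ht⟩) (L.get ⟨u, hu⟩) := by
  have hmono : StrictMono L.get := hL.sortedLT.strictMono_get
  have hlt : ∀ (a b : Fin L.length), a < b → L.get a < L.get b := fun a b h => hmono h
  set i := L.get ⟨t, ht⟩ with hi
  rcases Nat.lt_or_ge (t+1) L.length with h1 | h1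
  · have heq : (⟨(t+1) % L.length, Nat.mod_lt _ (by omega)⟩ : Fin L.length) = ⟨t+1, h1⟩ :=
      Fin.ext (Nat.mod_eq_of_lt h1)
    rw [heq]
    have hij : (i : Fin k) < L.get ⟨t+1, h1⟩ := hlt _ _ (by simp [Fin.lt_def])
    rcases Nat.lt_or_ge u t with hu2 | hu2
    · have hui : L.get ⟨u, hu⟩ < i := hlt _ _ (by simp [Fin.lt_def]; omega)
      have hk := (L.get ⟨t+1, h1⟩).isLt
      rw [cd_eq, cd_eq]
      simp only [Fin.lt_def] at hij hui
      split_ifs <;> omega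
    · have : t + 1 ≤ u := by omega
      have := hmono.monotone (a := (⟨t+1, h1⟩ : Fin L.length)) (b := ⟨u, hu⟩)
        (by simp [Fin.le_def]; omega)
      simp only [Fin.lt_def] at hij
      simp only [Fin.le_def] at this
      rw [cd_eq, cd_eq]
      split_ifs <;> omega
  · -- t is the last index
    have ht1 : t + 1 = L.length := by omega
    have h0 : 0 < L.length := by omega
    have heq : (⟨(t+1) % L.length, Nat.mod_lt _ (by omega)⟩ : Fin L.length) = ⟨0, h0⟩ := by
      apply Fin.ext; simp [ht1]
    rw [heq]
    have hu2 : u < t := by omega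
    have h0u : L.get ⟨0, h0⟩ ≤ L.get ⟨u, hu⟩ := hmono.monotone (by simp [Fin.le_def])
    have hui : L.get ⟨u, hu⟩ < i := hlt _ _ (by simp [Fin.lt_def]; omega)
    simp only [Fin.le_def, Fin.lt_def] at h0u hui
    have hk := (L.get ⟨0, h0⟩).isLt
    rw [cd_eq, cd_eq]
    split_ifs <;> omega

/-- Members of the circle braket multiset are consecutive (cyclically) elements
of the sorted list of `S`. -/
lemma mem_circleBrakets_struct {k : ℕ} {S : Finset (Fin k)} {pr : Fin k × Fin k}
    (h : pr ∈ circleBrakets k S) :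
    ∃ (t : ℕ) (ht : t < (S.sort (· ≤ ·)).length),
      pr.1 = (S.sort (· ≤ ·)).get ⟨t, ht⟩ ∧
      pr.2 = (S.sort (· ≤ ·)).get
        ⟨(t+1) % (S.sort (· ≤ ·)).length, Nat.mod_lt _ (by omega)⟩ := by
  unfold circleBrakets at h
  rw [Multiset.mem_coe] at h
  set L := S.sort (· ≤ ·) with hL
  obtain ⟨n, hn, hget⟩ := List.mem_iff_getElem.mp h
  have hlen : (L.zip (L.rotate 1)).length = L.length := by
    simp [List.length_zip, List.length_rotate]
  have hnL : n < L.length := hlen ▸ hn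
  have hrot : n < (L.rotate 1).length := by simpa [List.length_rotate] using hnL
  rw [List.getElem_zip] at hget
  rw [List.getElem_rotate] at hget
  refine ⟨n, hnL, ?_, ?_⟩
  · rw [← hget]; rfl
  · rw [← hget]; rfl

theorem stmt9 (k : ℕ) (hk : 1 ≤ k) (x : Fin k → ℕ)
    (hq : 1 ≤ Finset.univ.sup x)
    (M : Finset (Fin k))
    (hM : M = Finset.univ.filter (fun i => x i = Finset.univ.sup x))
    (hr : 2 ≤ M.card) :
    ∀ p ∈ U k x,
      ∃ s : ℕ, ∃ hs : s < M.card,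
        ((p : Fin k × Fin k).1.val + k - (nth k M ⟨s, hs⟩).val) % k +
            ((p : Fin k × Fin k).2.val + k - (p : Fin k × Fin k).1.val) % k ≤
          ((nth k M ⟨(s + 1) % M.card, Nat.mod_lt _ (by omega)⟩).val + k -
              (nth k M ⟨s, hs⟩).val) % k := by
  intro pr hpr
  rw [U, Multiset.mem_sum] at hpr
  obtain ⟨p, hp, hmem⟩ := hpr
  set G := greedySet k x p with hG
  have hMG : M ⊆ G := by
    intro μ hμ
    rw [hM, Finset.mem_filter] at hμ
    rw [hG, greedySet, Finset.mem_filter]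
    exact ⟨Finset.mem_univ _, hμ.2 ▸ (Finset.mem_Icc.mp hp).2⟩
  set L := G.sort (· ≤ ·) with hL
  obtain ⟨t, ht, hi, hj⟩ := mem_circleBrakets_struct hmem
  set i := pr.1 with hidef
  set j := pr.2 with hjdef
  -- j minimizes circular distance from i among elements of G other than i
  have hjmin : ∀ c ∈ G, c ≠ i → cd k i j ≤ cd k i c := by
    intro c hc hci
    have hcL : c ∈ G.sort (· ≤ ·) := (Finset.mem_sort _).mpr hc
    obtain ⟨u, hcu⟩ := List.mem_iff_get.mp hcL
    have hut : u.val ≠ t := by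
      intro hcontra
      apply hci
      rw [← hcu, hi]
      congr 1
      exact Fin.ext hcontra
    rw [hi, hj, ← hcu]
    exact cd_succ_min _ (Finset.sortedLT_sort G).pairwise t u.val ht u.isLt hut
  -- choose the index minimizing the circular distance to i
  have hcard : 0 < M.card := by omega
  haveI : Nonempty (Fin M.card) := ⟨⟨0, hcard⟩⟩
  obtain ⟨s₀, _, hmin⟩ := Finset.exists_min_image (Finset.univ : Finset (Fin M.card))
    (fun s => cd k (nth k M s) i) ⟨⟨0, hcard⟩, Finset.mem_univ _⟩
  have hmin' : ∀ s : Fin M.card, cd k (nth k M s₀) i ≤ cd k (nth k M s) i :=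
    fun s => hmin s (Finset.mem_univ s)
  set μ := nth k M s₀ with hμdef
  have hsν : (s₀.val + 1) % M.card < M.card := Nat.mod_lt _ hcard
  set ν := nth k M ⟨(s₀.val + 1) % M.card, hsν⟩ with hνdef
  have hnth_mem : ∀ s : Fin M.card, nth k M s ∈ M := fun s => (M.orderIsoOfFin rfl s).2
  have hnth_inj : Function.Injective (nth k M) := by
    intro a b hab
    have := (M.orderIsoOfFin rfl).injective (Subtype.ext hab)
    exact this
  have hsne : ((⟨(s₀.val + 1) % M.card, hsν⟩ : Fin M.card)) ≠ s₀ := by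
    intro hcontra
    have := Fin.mk.injEq (((s₀.val + 1) % M.card)) hsν s₀.val s₀.isLt
    rw [Fin.ext_iff] at hcontra
    simp only at hcontra
    rcases Nat.lt_or_ge (s₀.val + 1) M.card with h1 | h1
    · rw [Nat.mod_eq_of_lt h1] at hcontra; omega
    · have hs0 : s₀.val = M.card - 1 := by have := s₀.isLt; omega
      have : (s₀.val + 1) % M.card = 0 := by
        have : s₀.val + 1 = M.card := by omega
        simp [this]
      rw [this] at hcontra; omega
  have hνμ : ν ≠ μ := fun hcontra => hsne (hnth_inj hcontra)
  have hνG : ν ∈ G := hMG (hnth_mem _)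
  refine ⟨s₀.val, s₀.isLt, ?_⟩
  have hgoal : cd k μ i + cd k i j ≤ cd k μ ν := by
    by_cases hiμ : i = μ
    · have h0 : cd k μ i = 0 := (cd_zero_iff μ i).mpr hiμ.symm
      rw [h0, zero_add, ← hiμ]
      exact hjmin ν hνG (fun h => hνμ (h.trans hiμ))
    · -- i ≠ μ
      have h0 : 0 < cd k μ i := by
        rcases Nat.eq_zero_or_pos (cd k μ i) with h | h
        · exact absurd ((cd_zero_iff μ i).mp h).symm hiμ
        · exact h
      have hνμ0 : 0 < cd k μ ν := by
        rcases Nat.eq_zero_or_pos (cd k μ ν) with h | h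
        · exact absurd ((cd_zero_iff μ ν).mp h).symm hνμ
        · exact h
      have hne : cd k μ i ≠ cd k μ ν := by
        intro hcontra
        have hiν : i = ν := cd_right_cancel hcontra
        have := hmin' ⟨(s₀.val + 1) % M.card, hsν⟩
        rw [← hνdef, ← hiν] at this
        have : cd k μ i = 0 := by
          have h2 : cd k i i = 0 := (cd_zero_iff i i).mpr rfl
          omega
        omega
      have hlt : cd k μ i < cd k μ ν := by
        rcases Nat.lt_or_ge (cd k μ i) (cd k μ ν) with h | h
        · exact h
        · exfalso
          have hstrict : cd k μ ν < cd k μ i := by omega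
          rcases cd_cycle μ ν i with hcyc | hcyc
          · -- cd ν i = cd μ i - cd μ ν < cd μ i, contradicting minimality
            have hminν := hmin' ⟨(s₀.val + 1) % M.card, hsν⟩
            rw [← hνdef] at hminν
            omega
          · have := cd_lt ν i
            omega
      rcases cd_cycle μ i ν with hcyc | hcyc
      · -- cd i ν = cd μ ν - cd μ i
        have hiν0 : 0 < cd k i ν := by omega
        have hiν : ν ≠ i := by
          intro hcontra
          rw [hcontra] at hiν0
          have : cd k i i = 0 := (cd_zero_iff i i).mpr rfl
          omega
        have := hjmin ν hνG hiν
        omega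
      · have := cd_lt i ν
        omega
  exact hgoal
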